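/- If the utility functions of a two-player game on [0,1]² satisfy ∂²u_1/∂p1∂p2 = ∂²u_2/∂p1∂p2 everywhere (i.e., the game is an exact potential game in the sense of Monderer–Shapley's second-derivative characterization for smooth games), then the game admits at least one pure-strategy Nash Equilibrium. -/

import Mathlib

private lemma sliceDeriv (f : ℝ × ℝ → ℝ) (hf : ContDiff ℝ 2 f) (a y : ℝ) :
    HasDerivAt (fun b => f (a, b)) (fderiv ℝ f (a, y) (0, 1)) y := by
  have hline : HasDerivAt (fun b : ℝ => ((a, b) : ℝ × ℝ)) ((0 : ℝ), (1 : ℝ)) y :=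
    (hasDerivAt_const y a).prodMk (hasDerivAt_id y)
  exact ((hf.differentiable (by norm_num) (a, y)).hasFDerivAt).comp_hasDerivAt y hline

private lemma diffA (f : ℝ × ℝ → ℝ) (hf : ContDiff ℝ 2 f) (y : ℝ) :
    Differentiable ℝ (fun a => fderiv ℝ f (a, y) (0, 1)) := by
  have h1 : ContDiff ℝ 1 (fderiv ℝ f) := hf.fderiv_right (by norm_num)
  have h2 : ContDiff ℝ 1 (fun a : ℝ => fderiv ℝ f (a, y)) :=
    h1.comp (contDiff_id.prodMk contDiff_const)
  exact ((ContinuousLinearMap.apply ℝ ℝ ((0:ℝ),(1:ℝ))).contDiff.comp h2).differentiable one_ne_zero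

/-- A two-player game on [0,1]² with twice continuously differentiable
utilities whose mixed second partial derivatives coincide everywhere (the smooth
potential-game condition of Monderer–Shapley) admits at least one pure-strategy
Nash Equilibrium. -/
theorem smooth_potential_game_has_NE
    (u1 u2 : ℝ → ℝ → ℝ)
    (h1 : ContDiff ℝ 2 (fun p : ℝ × ℝ => u1 p.1 p.2))
    (h2 : ContDiff ℝ 2 (fun p : ℝ × ℝ => u2 p.1 p.2))
    (hmixed : ∀ x y : ℝ,
      deriv (fun a => deriv (fun b => u1 a b) y) x =
      deriv (fun a => deriv (fun b => u2 a b) y) x) :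
    ∃ p1 ∈ Set.Icc (0:ℝ) 1, ∃ p2 ∈ Set.Icc (0:ℝ) 1,
      (∀ q1 ∈ Set.Icc (0:ℝ) 1, u1 q1 p2 ≤ u1 p1 p2) ∧
      (∀ q2 ∈ Set.Icc (0:ℝ) 1, u2 p1 q2 ≤ u2 p1 p2) := by
  set f1 : ℝ × ℝ → ℝ := fun p => u1 p.1 p.2 with hf1
  set f2 : ℝ × ℝ → ℝ := fun p => u2 p.1 p.2 with hf2
  set fD : ℝ × ℝ → ℝ := fun p => u1 p.1 p.2 - u2 p.1 p.2 with hfD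
  have hD : ContDiff ℝ 2 fD := h1.sub h2
  -- fderiv of fD is difference of fderivs, applied to (0,1)
  have hsplit : ∀ p : ℝ × ℝ,
      fderiv ℝ fD p (0, 1) = fderiv ℝ f1 p (0, 1) - fderiv ℝ f2 p (0, 1) := by
    intro p
    have : fderiv ℝ fD p = fderiv ℝ f1 p - fderiv ℝ f2 p :=
      fderiv_sub (h1.differentiable (by norm_num) p) (h2.differentiable (by norm_num) p)
    simp [this]
  -- mixed partial of fD is zero
  have hmix0 : ∀ x y : ℝ, deriv (fun a => fderiv ℝ fD (a, y) (0, 1)) x = 0 := by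
    intro x y
    have e : (fun a => fderiv ℝ fD (a, y) (0, 1)) =
        fun a => fderiv ℝ f1 (a, y) (0, 1) - fderiv ℝ f2 (a, y) (0, 1) := by
      funext a; exact hsplit (a, y)
    rw [e, deriv_fun_sub ((diffA f1 h1 y) x) ((diffA f2 h2 y) x)]
    have e1 : (fun a => fderiv ℝ f1 (a, y) (0, 1)) = fun a => deriv (fun b => u1 a b) y := by
      funext a; exact ((sliceDeriv f1 h1 a y).deriv).symm
    have e2 : (fun a => fderiv ℝ f2 (a, y) (0, 1)) = fun a => deriv (fun b => u2 a b) y := by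
      funext a; exact ((sliceDeriv f2 h2 a y).deriv).symm
    rw [e1, e2, hmixed x y, sub_self]
  -- hence a ↦ ∂₂fD(a,y) is constant
  have hconst1 : ∀ y a : ℝ, fderiv ℝ fD (a, y) (0, 1) = fderiv ℝ fD (0, y) (0, 1) := by
    intro y a
    exact is_const_of_deriv_eq_zero (diffA fD hD y) (fun x => hmix0 x y) a 0
  -- hence fD(a,b) - fD(0,b) is independent of b
  have hkey : ∀ a b : ℝ, fD (a, b) - fD (0, b) = fD (a, 0) - fD (0, 0) := by
    intro a b
    have hdiff : Differentiable ℝ (fun t => fD (a, t) - fD (0, t)) := by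
      intro t
      exact ((sliceDeriv fD hD a t).sub (sliceDeriv fD hD 0 t)).differentiableAt
    have hzero : ∀ t, deriv (fun t => fD (a, t) - fD (0, t)) t = 0 := by
      intro t
      have h := ((sliceDeriv fD hD a t).fun_sub (sliceDeriv fD hD 0 t)).deriv
      rw [h, hconst1 t a, sub_self]
    exact is_const_of_deriv_eq_zero hdiff hzero b 0
  -- potential function
  set P : ℝ × ℝ → ℝ := fun p => u1 p.1 p.2 - u1 0 p.2 + u2 0 p.2 with hP
  have hPc : Continuous P := by
    have c1 : Continuous f1 := h1.continuous
    have c2 : Continuous f2 := h2.continuous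
    exact ((c1.sub (c1.comp (continuous_const.prodMk continuous_snd)))).add
      (c2.comp (continuous_const.prodMk continuous_snd))
  obtain ⟨p, hpK, hmax⟩ :=
    (isCompact_Icc (a := ((0:ℝ),(0:ℝ))) (b := (1,1))).exists_isMaxOn
      ⟨(0,0), by simp⟩ hPc.continuousOn
  rw [Set.mem_Icc] at hpK
  refine ⟨p.1, ⟨hpK.1.1, hpK.2.1⟩, p.2, ⟨hpK.1.2, hpK.2.2⟩, ?_, ?_⟩
  · intro q1 hq1
    have hmem : ((q1, p.2) : ℝ × ℝ) ∈ Set.Icc ((0:ℝ),(0:ℝ)) (1,1) := by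
      rw [Set.mem_Icc]
      exact ⟨⟨hq1.1, hpK.1.2⟩, ⟨hq1.2, hpK.2.2⟩⟩
    have := hmax hmem
    simp only [P] at this
    simpa using this
  · intro q2 hq2
    have hmem : ((p.1, q2) : ℝ × ℝ) ∈ Set.Icc ((0:ℝ),(0:ℝ)) (1,1) := by
      rw [Set.mem_Icc]
      exact ⟨⟨hpK.1.1, hq2.1⟩, ⟨hpK.2.1, hq2.2⟩⟩
    have hle := hmax hmem
    simp only [P] at hle
    have e1 := hkey p.1 q2
    have e2 := hkey p.1 p.2
    simp only [fD] at e1 e2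
    simp only [Set.mem_setOf_eq] at hle
    linarith
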